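/- Let n ≥ 3, μ a finite positive Borel measure with compact support in the hyperplane ℝ^{n-1} = {x_n = 0}, a ∈ ℝ^{n-1}, and R > 0. Then the function x' ↦ U^μ(x', √(R² − |x'−a|²)), the restriction of the Newtonian potential U^μ(x) = c_n ∫ |x−y|^{2−n} dμ(y) (with c_n = 1/((n−2)|S^{n-1}|)) to the upper hemisphere of the sphere of center (a,0) and radius R, expressed as a function of x' ∈ B(a,R) ⊂ ℝ^{n-1}, is convex. -/

import Mathlib

open MeasureTheory

open Set Real in
lemma convexOn_rpow_neg {p : ℝ} (hp : p ≤ 0) :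
    ConvexOn ℝ (Set.Ioi (0:ℝ)) fun x : ℝ => x ^ p := by
  have hderiv : ∀ x ∈ Ioi (0:ℝ), HasDerivAt (fun x : ℝ => x ^ p) (p * x ^ (p - 1)) x :=
    fun x hx => Real.hasDerivAt_rpow_const (Or.inl (ne_of_gt hx))
  apply convexOn_of_deriv2_nonneg (convex_Ioi 0)
  · intro x hx
    exact ((hderiv x hx).differentiableAt.continuousAt).continuousWithinAt
  · rw [interior_Ioi]
    exact fun x hx => (hderiv x hx).differentiableAt.differentiableWithinAt
  · rw [interior_Ioi]
    have heq : EqOn (deriv fun x : ℝ => x ^ p) (fun x => p * x ^ (p - 1)) (Ioi 0) :=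
      fun x hx => (hderiv x hx).deriv
    rw [differentiableOn_congr heq]
    intro x hx
    exact ((Real.hasDerivAt_rpow_const (Or.inl (ne_of_gt hx))).const_mul
      p).differentiableAt.differentiableWithinAt
  · rw [interior_Ioi]
    intro x hx
    have heq : deriv (fun x : ℝ => x ^ p) =ᶠ[nhds x] fun x => p * x ^ (p - 1) := by
      filter_upwards [Ioi_mem_nhds hx] with y hy
      exact (hderiv y hy).deriv
    have h2 : deriv^[2] (fun x : ℝ => x ^ p) x = p * ((p - 1) * x ^ (p - 1 - 1)) := by
      simp only [Function.iterate_succ, Function.iterate_zero, Function.comp_apply,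
        Function.id_def]
      rw [Filter.EventuallyEq.deriv_eq heq]
      exact (((Real.hasDerivAt_rpow_const (Or.inl (ne_of_gt hx)))).const_mul p).deriv
    rw [h2, ← mul_assoc]
    exact mul_nonneg (by nlinarith) (Real.rpow_nonneg hx.le _)

lemma euclid_norm_sq {k : ℕ} (z : EuclideanSpace ℝ (Fin k)) : ‖z‖ ^ 2 = ∑ i, z i ^ 2 := by
  rw [EuclideanSpace.norm_eq, Real.sq_sqrt (by positivity)]
  simp [Real.norm_eq_abs, sq_abs]

noncomputable def stmt18.toE {k : ℕ} (f : Fin k → ℝ) : EuclideanSpace ℝ (Fin k) :=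
  (WithLp.equiv 2 (Fin k → ℝ)).symm f

noncomputable def stmt18.fromE {k : ℕ} (x : EuclideanSpace ℝ (Fin k)) : Fin k → ℝ :=
  WithLp.equiv 2 (Fin k → ℝ) x

/-- The restriction of the Newtonian potential `U^μ` of a measure `μ` supported
in the hyperplane `{x_n = 0}` to an upper hemisphere centered at `(a,0)` with
radius `R`, viewed as a function of `x' ∈ B(a,R) ⊂ ℝ^{n−1}`, is convex.
Here `n = m + 1 ≥ 3`, the hyperplane is the first `m` coordinates, and
`c = 1/((n−2)|S^{n−1}|) > 0`. -/
theorem stmt_18 {m : ℕ} (hm : 3 ≤ m + 1)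
    (μ : Measure (EuclideanSpace ℝ (Fin (m + 1)))) [IsFiniteMeasure μ]
    (K : Set (EuclideanSpace ℝ (Fin (m + 1)))) (hK : IsCompact K) (hKμ : μ Kᶜ = 0)
    (hplane : μ {x | ¬ x (Fin.last m) = 0} = 0)
    (S c : ℝ) (hS : 0 < S) (hc : c = 1 / (((m : ℝ) + 1 - 2) * S))
    (U : EuclideanSpace ℝ (Fin (m + 1)) → ℝ)
    (hU : ∀ x, U x = c * ∫ y, ‖x - y‖ ^ ((2 : ℝ) - ((m : ℝ) + 1)) ∂μ)
    (a : EuclideanSpace ℝ (Fin m)) (R : ℝ) (hR : 0 < R) :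
    ConvexOn ℝ (Metric.ball a R)
      (fun x' : EuclideanSpace ℝ (Fin m) =>
        U (stmt18.toE (Fin.snoc (stmt18.fromE x')
          (Real.sqrt (R ^ 2 - ‖x' - a‖ ^ 2))))) := by
  have hm2 : (2:ℝ) ≤ (m:ℝ) := by exact_mod_cast (by omega : 2 ≤ m)
  set α : ℝ := (2 : ℝ) - ((m : ℝ) + 1) with hα
  set p : ℝ := α / 2 with hpdef
  have hp : p ≤ 0 := by rw [hpdef, hα]; linarith
  have hc0 : 0 ≤ c := by
    rw [hc]
    have h1 : (0:ℝ) < ((m : ℝ) + 1 - 2) * S := by nlinarith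
    exact le_of_lt (by positivity)
  set P : EuclideanSpace ℝ (Fin m) → EuclideanSpace ℝ (Fin (m + 1)) :=
    fun z => stmt18.toE (Fin.snoc (stmt18.fromE z) (Real.sqrt (R ^ 2 - ‖z - a‖ ^ 2))) with hP
  set A : EuclideanSpace ℝ (Fin m) → EuclideanSpace ℝ (Fin (m + 1)) → ℝ := fun z y =>
    R ^ 2 + (∑ i, (a i - y (Fin.castSucc i)) ^ 2)
      + 2 * ∑ i, (z i - a i) * (a i - y (Fin.castSucc i)) with hA
  have hAalt : ∀ (z : EuclideanSpace ℝ (Fin m)) y,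
      A z y = (∑ i, (z i - y (Fin.castSucc i)) ^ 2) + (R ^ 2 - ‖z - a‖ ^ 2) := by
    intro z y
    have hsub : ‖z - a‖ ^ 2 = ∑ i, (z i - a i) ^ 2 := by
      rw [euclid_norm_sq]; exact Finset.sum_congr rfl fun i _ => by rw [PiLp.sub_apply]
    have key : ∑ i, (z i - y (Fin.castSucc i)) ^ 2
        = (∑ i, (a i - y (Fin.castSucc i)) ^ 2)
          + 2 * (∑ i, (z i - a i) * (a i - y (Fin.castSucc i))) + ∑ i, (z i - a i) ^ 2 := by
      rw [Finset.mul_sum, ← Finset.sum_add_distrib, ← Finset.sum_add_distrib]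
      exact Finset.sum_congr rfl fun i _ => by ring
    rw [hA]; dsimp only; rw [key, hsub]; ring
  have hApos : ∀ z ∈ Metric.ball a R, ∀ y, 0 < A z y := by
    intro z hz y
    rw [hAalt]
    have hza : ‖z - a‖ < R := by rwa [Metric.mem_ball, dist_eq_norm] at hz
    have h1 : ‖z - a‖ ^ 2 < R ^ 2 := by nlinarith [norm_nonneg (z - a)]
    have h2 : (0:ℝ) ≤ ∑ i, (z i - y (Fin.castSucc i)) ^ 2 :=
      Finset.sum_nonneg fun i _ => sq_nonneg _
    linarith
  have hAge : ∀ z ∈ Metric.ball a R, ∀ y, R ^ 2 - ‖z - a‖ ^ 2 ≤ A z y := by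
    intro z _ y
    rw [hAalt]
    have h2 : (0:ℝ) ≤ ∑ i, (z i - y (Fin.castSucc i)) ^ 2 :=
      Finset.sum_nonneg fun i _ => sq_nonneg _
    linarith
  have heq : ∀ z ∈ Metric.ball a R, ∀ y, y (Fin.last m) = 0 → ‖P z - y‖ ^ α = A z y ^ p := by
    intro z hz y hy
    have hza : ‖z - a‖ < R := by rwa [Metric.mem_ball, dist_eq_norm] at hz
    have h1 : (0:ℝ) ≤ R ^ 2 - ‖z - a‖ ^ 2 := by nlinarith [norm_nonneg (z - a)]
    have hPsq : ‖P z - y‖ ^ 2 = A z y := by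
      rw [euclid_norm_sq, hAalt]
      have hcoords : ∀ i : Fin (m + 1), (P z - y) i = P z i - y i := fun i => rfl
      simp only [hcoords]
      rw [Fin.sum_univ_castSucc]
      have hlast : P z (Fin.last m) = Real.sqrt (R ^ 2 - ‖z - a‖ ^ 2) := by
        rw [hP]; dsimp only
        rw [stmt18.toE, WithLp.equiv_symm_apply, PiLp.toLp_apply, Fin.snoc_last]
      have hcs : ∀ i : Fin m, P z (Fin.castSucc i) = z i := by
        intro i
        rw [hP]; dsimp only
        rw [stmt18.toE, WithLp.equiv_symm_apply, PiLp.toLp_apply, Fin.snoc_castSucc]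
        rfl
      rw [hlast, hy]
      simp only [hcs, sub_zero]
      rw [Real.sq_sqrt h1]
    have hApos' := hApos z hz y
    have hn : ‖P z - y‖ = Real.sqrt (A z y) := by
      rw [← hPsq]; exact (Real.sqrt_sq (norm_nonneg _)).symm
    rw [hn, Real.sqrt_eq_rpow, ← Real.rpow_mul hApos'.le]
    congr 1
    rw [hpdef]; ring
  have hcont : ∀ z : EuclideanSpace ℝ (Fin m), Continuous fun y => A z y := by
    intro z
    rw [hA]
    have hcoord : ∀ j : Fin (m + 1),
        Continuous fun y : EuclideanSpace ℝ (Fin (m + 1)) => y j := by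
      intro j
      exact (EuclideanSpace.proj j : EuclideanSpace ℝ (Fin (m + 1)) →L[ℝ] ℝ).continuous
    fun_prop
  have hInt : ∀ z ∈ Metric.ball a R, Integrable (fun y => A z y ^ p) μ := by
    intro z hz
    have hza : ‖z - a‖ < R := by rwa [Metric.mem_ball, dist_eq_norm] at hz
    have hε : (0:ℝ) < R ^ 2 - ‖z - a‖ ^ 2 := by nlinarith [norm_nonneg (z - a)]
    have hcont2 : Continuous fun y => A z y ^ p :=
      (hcont z).rpow_const fun y => Or.inl (hApos z hz y).ne'
    refine Integrable.mono' (integrable_const ((R ^ 2 - ‖z - a‖ ^ 2) ^ p))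
      hcont2.aestronglyMeasurable ?_
    refine Filter.Eventually.of_forall fun y => ?_
    rw [Real.norm_eq_abs, abs_of_nonneg (Real.rpow_nonneg (hApos z hz y).le _)]
    exact Real.rpow_le_rpow_of_nonpos hε (hAge z hz y) hp
  have hae : ∀ᵐ y ∂μ, y (Fin.last m) = 0 := by
    rw [MeasureTheory.ae_iff]; exact hplane
  have hUeq : ∀ z ∈ Metric.ball a R, U (P z) = c * ∫ y, A z y ^ p ∂μ := by
    intro z hz
    rw [hU]
    congr 1
    apply integral_congr_ae
    filter_upwards [hae] with y hy
    exact heq z hz y hy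
  refine ⟨convex_ball a R, ?_⟩
  intro z₁ hz₁ z₂ hz₂ t s ht hs hts
  have hw' : t • z₁ + s • z₂ ∈ Metric.ball a R := convex_ball a R hz₁ hz₂ ht hs hts
  have haff : ∀ y, A (t • z₁ + s • z₂) y = t * A z₁ y + s * A z₂ y := by
    intro y
    have happ : ∀ i : Fin m, (t • z₁ + s • z₂) i = t * z₁ i + s * z₂ i := by
      intro i
      rw [PiLp.add_apply, PiLp.smul_apply, PiLp.smul_apply, smul_eq_mul, smul_eq_mul]
    rw [hA]
    dsimp only
    simp only [happ]
    have hsum : ∑ i, (t * z₁ i + s * z₂ i - a i) * (a i - y (Fin.castSucc i))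
        = t * ∑ i, (z₁ i - a i) * (a i - y (Fin.castSucc i))
          + s * ∑ i, (z₂ i - a i) * (a i - y (Fin.castSucc i)) := by
      rw [Finset.mul_sum, Finset.mul_sum, ← Finset.sum_add_distrib]
      refine Finset.sum_congr rfl fun i _ => ?_
      linear_combination (a i * (a i - y (Fin.castSucc i))) * hts
    rw [hsum]
    linear_combination (-(R ^ 2 + ∑ i, (a i - y (Fin.castSucc i)) ^ 2)) * hts
  have hptw : ∀ y, A (t • z₁ + s • z₂) y ^ p ≤ t * A z₁ y ^ p + s * A z₂ y ^ p := by
    intro y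
    have hcv := (convexOn_rpow_neg hp).2 (Set.mem_Ioi.2 (hApos z₁ hz₁ y))
      (Set.mem_Ioi.2 (hApos z₂ hz₂ y)) ht hs hts
    simp only [smul_eq_mul] at hcv
    rw [haff y]
    exact hcv
  have hint₁ := hInt z₁ hz₁
  have hint₂ := hInt z₂ hz₂
  have hintw := hInt _ hw'
  show U (P (t • z₁ + s • z₂)) ≤ t • U (P z₁) + s • U (P z₂)
  rw [smul_eq_mul, smul_eq_mul, hUeq _ hw', hUeq z₁ hz₁, hUeq z₂ hz₂]
  calc c * ∫ y, A (t • z₁ + s • z₂) y ^ p ∂μ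
      ≤ c * ∫ y, (t * A z₁ y ^ p + s * A z₂ y ^ p) ∂μ := by
        refine mul_le_mul_of_nonneg_left ?_ hc0
        exact integral_mono hintw ((hint₁.const_mul t).add (hint₂.const_mul s))
          fun y => hptw y
    _ = t * (c * ∫ y, A z₁ y ^ p ∂μ) + s * (c * ∫ y, A z₂ y ^ p ∂μ) := by
        rw [integral_add (hint₁.const_mul t) (hint₂.const_mul s),
          integral_const_mul, integral_const_mul]
        ring
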